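/- Let $f(x)=b_0+b_1 x+b_2 x^2+\cdots$ be a nonzero real power series convergent on $(-R,R)$, $R>0$. Then the number of zeroes of $f$ in $(0,R)$, counted with multiplicity, is at most the number of sign changes of the coefficient sequence $(b_0,b_1,b_2,\ldots)$. -/

import Mathlib

open Finset Set

-- Number of sign changes of a real sequence, as an extended natural number.
noncomputable def signChanges (b : ℕ → ℝ) : ℕ∞ :=
  ⨆ k ∈ {k : ℕ | ∃ i : Fin (k+1) → ℕ, StrictMono i ∧
      ∀ j : Fin k, b (i j.castSucc) * b (i j.succ) < 0}, (k : ℕ∞)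

/-- `b` admits an alternating chain with `k` sign changes. -/
def SCaux (b : ℕ → ℝ) (k : ℕ) : Prop :=
  ∃ i : Fin (k+1) → ℕ, StrictMono i ∧
      ∀ j : Fin k, b (i j.castSucc) * b (i j.succ) < 0

lemma sc_cons {b : ℕ → ℝ} {k : ℕ} {i : Fin (k+1) → ℕ} (him : StrictMono i)
    (halt : ∀ j : Fin k, b (i j.castSucc) * b (i j.succ) < 0)
    {x : ℕ} (hx : x < i 0) (hxb : b x * b (i 0) < 0) :
    ∃ i' : Fin (k+2) → ℕ, i' 0 = x ∧ StrictMono i' ∧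
      ∀ j : Fin (k+1), b (i' j.castSucc) * b (i' j.succ) < 0 := by
  refine ⟨Fin.cons x i, rfl, ?_, ?_⟩
  · intro a c hac
    rcases Fin.eq_zero_or_eq_succ c with rfl | ⟨c', rfl⟩
    · exact absurd hac (Fin.not_lt_zero a)
    · rcases Fin.eq_zero_or_eq_succ a with rfl | ⟨a', rfl⟩
      · simpa [Fin.cons_succ] using lt_of_lt_of_le hx (him.monotone (Fin.zero_le c'))
      · have h1 : a' < c' := by rwa [Fin.succ_lt_succ_iff] at hac
        simpa [Fin.cons_succ] using him h1
  · intro j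
    rcases Fin.eq_zero_or_eq_succ j with rfl | ⟨j', rfl⟩
    · simpa [Fin.cons_succ, Fin.castSucc_zero, Fin.cons_zero] using hxb
    · have h1 : (j'.succ).castSucc = (j'.castSucc).succ := (Fin.succ_castSucc j').symm
      rw [h1, Fin.cons_succ, Fin.cons_succ]
      exact halt j'

lemma sc_one_of {b : ℕ → ℝ} {n n' : ℕ} (h : n < n') (hlt : b n * b n' < 0) : SCaux b 1 := by
  refine ⟨Fin.cons n (fun _ => n'), ?_, ?_⟩
  · intro a c hac
    rcases Fin.eq_zero_or_eq_succ c with rfl | ⟨c', rfl⟩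
    · exact absurd hac (Fin.not_lt_zero a)
    · rcases Fin.eq_zero_or_eq_succ a with rfl | ⟨a', rfl⟩
      · simpa [Fin.cons_succ] using h
      · exfalso
        have h2 := Fin.succ_lt_succ_iff.1 hac
        rw [Subsingleton.elim a' c'] at h2
        exact lt_irrefl _ h2
  · intro j
    have hj : j = 0 := Subsingleton.elim j 0
    subst hj
    simpa [Fin.cons_succ, Fin.castSucc_zero, Fin.cons_zero] using hlt

/-- Main combinatorial step: multiplying coefficients by `(n - (q - 1/2))`, where `q` is the
position of the first sign change, removes exactly one sign change. Contrapositive form: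
a chain for `c` of length `k+1` yields a chain for `b` of length `k+2`. -/
lemma sc_step {b c : ℕ → ℝ} {q : ℕ}
    (hc : ∀ n, c n = ((n : ℝ) - ((q:ℝ) - 1/2)) * b n)
    (hq : ∃ p, p < q ∧ b p * b q < 0)
    (hmin : ∀ n, n < q → ¬ ∃ p, p < n ∧ b p * b n < 0)
    (k : ℕ) (hsc : SCaux c (k+1)) : SCaux b (k+2) := by
  obtain ⟨p, hpq, hpb⟩ := hq
  obtain ⟨i, him, halt⟩ := hsc
  have hbq : b q ≠ 0 := by rintro h; rw [h, mul_zero] at hpb; exact lt_irrefl 0 hpb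
  have hbp : b p ≠ 0 := by rintro h; rw [h, zero_mul] at hpb; exact lt_irrefl 0 hpb
  have hbelow : ∀ n n', n < q → n' < q → ¬ (b n * b n' < 0) := by
    intro n n' hn hn' hlt
    rcases lt_trichotomy n n' with h | h | h
    · exact hmin n' hn' ⟨n, h, hlt⟩
    · exact absurd hlt (by rw [h]; exact not_lt.2 (mul_self_nonneg _))
    · exact hmin n hn ⟨n', h, by rwa [mul_comm]⟩
  have hsign : ∀ n, n < q → b n ≠ 0 → b n * b q < 0 := by
    intro n hn hne
    have h1 : 0 < b n * b p :=
      lt_of_le_of_ne (not_lt.1 (hbelow n p hn hpq)) (Ne.symm (mul_ne_zero hne hbp))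
    nlinarith [sq_nonneg (b p), mul_pos h1 (neg_pos.2 hpb)]
  have hneg : ∀ n : ℕ, n < q → (n:ℝ) - ((q:ℝ) - 1/2) < 0 := by
    intro n hn
    have h1 : (n:ℝ) + 1 ≤ q := by exact_mod_cast hn
    linarith
  have hposf : ∀ n : ℕ, q ≤ n → 0 < (n:ℝ) - ((q:ℝ) - 1/2) := by
    intro n hn
    have h1 : (q:ℝ) ≤ n := by exact_mod_cast hn
    linarith
  have htrans : ∀ n n', q ≤ n → q ≤ n' → c n * c n' < 0 → b n * b n' < 0 := by
    intro n n' hn hn' h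
    rw [hc n, hc n'] at h
    nlinarith [mul_pos (hposf n hn) (hposf n' hn')]
  have htrans3 : ∀ n n', n < q → n' < q → c n * c n' < 0 → b n * b n' < 0 := by
    intro n n' hn hn' h
    rw [hc n, hc n'] at h
    nlinarith [mul_pos_of_neg_of_neg (hneg n hn) (hneg n' hn')]
  have htrans2 : ∀ n n', n < q → q ≤ n' → c n * c n' < 0 → 0 < b n * b n' := by
    intro n n' hn hn' h
    rw [hc n, hc n'] at h
    nlinarith [mul_neg_of_neg_of_pos (hneg n hn) (hposf n' hn')]
  have h01 : c (i 0) * c (i 1) < 0 := by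
    have h1 := halt 0
    simpa [Fin.castSucc_zero, Fin.succ_zero_eq_one] using h1
  have hb0ne : b (i 0) ≠ 0 := by
    intro h
    rw [hc (i 0), h, mul_zero, zero_mul] at h01
    exact lt_irrefl 0 h01
  by_cases h0 : i 0 < q
  · -- straddle case : only `i 0` is below `q`
    have h1 : q ≤ i 1 := by
      by_contra h1
      push_neg at h1
      exact hbelow _ _ h0 h1 (htrans3 _ _ h0 h1 h01)
    have hstrad : 0 < b (i 0) * b (i 1) := htrans2 _ _ h0 h1 h01
    have hsq : b (i 0) * b q < 0 := hsign _ h0 hb0ne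
    have hq1ne : b q * b (i 1) < 0 := by
      nlinarith [mul_neg_of_pos_of_neg hstrad hsq, sq_nonneg (b (i 0))]
    have hq1 : q < i 1 := by
      refine lt_of_le_of_ne h1 (fun h => ?_)
      rw [← h] at hq1ne
      exact absurd hq1ne (not_lt.2 (mul_self_nonneg _))
    set t : Fin (k+1) → ℕ := fun j => i j.succ with ht
    have ht0 : t 0 = i 1 := by
      rw [ht]
      exact congrArg i Fin.succ_zero_eq_one
    have htmono : StrictMono t := fun a c hac => him (Fin.succ_lt_succ_iff.2 hac)
    have htge : ∀ j : Fin (k+1), q ≤ t j := by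
      intro j
      refine le_trans h1 (him.monotone ?_)
      simp only [Fin.le_def, Fin.val_one, Fin.val_succ]
      omega
    have htalt : ∀ j : Fin k, b (t j.castSucc) * b (t j.succ) < 0 := by
      intro j
      have h2 := halt j.succ
      rw [← Fin.succ_castSucc] at h2
      exact htrans _ _ (htge j.castSucc) (htge j.succ) h2
    obtain ⟨i₂, hi₂0, hi₂mono, hi₂alt⟩ := sc_cons htmono htalt
      (x := q) (by rw [ht0]; exact hq1) (by rw [ht0]; exact hq1ne)
    obtain ⟨i₃, _, hi₃mono, hi₃alt⟩ := sc_cons hi₂mono hi₂alt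
      (x := i 0) (by rw [hi₂0]; exact h0) (by rw [hi₂0]; exact hsq)
    exact ⟨i₃, hi₃mono, hi₃alt⟩
  · push_neg at h0
    have hge : ∀ j, q ≤ i j := fun j => le_trans h0 (him.monotone (Fin.zero_le j))
    have halt' : ∀ j : Fin (k+1), b (i j.castSucc) * b (i j.succ) < 0 :=
      fun j => htrans _ _ (hge _) (hge _) (halt j)
    by_cases hqb : b q * b (i 0) < 0
    · have hqi0 : q < i 0 := by
        refine lt_of_le_of_ne h0 (fun h => ?_)
        rw [← h] at hqb
        exact absurd hqb (not_lt.2 (mul_self_nonneg _))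
      obtain ⟨i₂, _, hmono, haltf⟩ := sc_cons him halt' hqi0 hqb
      exact ⟨i₂, hmono, haltf⟩
    · have hqb' : 0 < b q * b (i 0) :=
        lt_of_le_of_ne (not_lt.1 hqb) (Ne.symm (mul_ne_zero hbq hb0ne))
      have hpb0 : b p * b (i 0) < 0 := by
        nlinarith [mul_neg_of_neg_of_pos hpb hqb', sq_nonneg (b q)]
      obtain ⟨i₂, _, hmono, haltf⟩ := sc_cons him halt' (lt_of_lt_of_le hpq h0) hpb0
      exact ⟨i₂, hmono, haltf⟩

lemma tsum_ne_zero_of_no_change {b : ℕ → ℝ} (hb : b ≠ 0) (hnsc : ¬ SCaux b 1)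
    {R z : ℝ} (hconv : ∀ x ∈ Ioo (-R) R, Summable fun n => b n * x ^ n)
    (hz : z ∈ Ioo (0:ℝ) R) : (∑' n, b n * z ^ n) ≠ 0 := by
  have hzI : z ∈ Ioo (-R) R := ⟨by nlinarith [hz.1, hz.2], hz.2⟩
  have hns : ∀ n n', ¬ (b n * b n' < 0) := by
    intro n n' h
    rcases lt_trichotomy n n' with hh | hh | hh
    · exact hnsc (sc_one_of hh h)
    · rw [hh] at h; exact absurd h (not_lt.2 (mul_self_nonneg _))
    · exact hnsc (sc_one_of hh (by rwa [mul_comm]))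
  obtain ⟨n0, hn0⟩ := Function.ne_iff.1 hb
  rcases hn0.lt_or_gt with hneg | hpos
  · have hall : ∀ n, b n ≤ 0 := by
      intro n; by_contra hgt; push_neg at hgt
      exact hns n n0 (mul_neg_of_pos_of_neg hgt hneg)
    have hpos' : 0 < ∑' n, -(b n * z ^ n) := by
      refine Summable.tsum_pos ((hconv z hzI).neg) (fun n => ?_) n0 ?_
      · nlinarith [mul_nonneg (neg_nonneg.2 (hall n)) (pow_nonneg hz.1.le n)]
      · have h1 : 0 < (-b n0) * z ^ n0 := mul_pos (neg_pos.2 hneg) (pow_pos hz.1 n0)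
        nlinarith [h1]
    intro h
    rw [tsum_neg, h, neg_zero] at hpos'
    exact lt_irrefl 0 hpos'
  · have hall : ∀ n, 0 ≤ b n := by
      intro n; by_contra hlt; push_neg at hlt
      exact hns n0 n (mul_neg_of_pos_of_neg hpos hlt)
    have hpos' : 0 < ∑' n, b n * z ^ n :=
      Summable.tsum_pos (hconv z hzI) (fun n => mul_nonneg (hall n) (pow_nonneg hz.1.le n)) n0
        (mul_pos hpos (pow_pos hz.1 n0))
    exact hpos'.ne'

lemma mem_ball_iff_Ioo' {R x : ℝ} :
    x ∈ Metric.eball (0:ℝ) (ENNReal.ofReal R) ↔ x ∈ Ioo (-R) R := by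
  rw [Metric.mem_eball, edist_lt_ofReal, Real.dist_eq, sub_zero, Set.mem_Ioo, abs_lt]

lemma rep_ball {b : ℕ → ℝ} {R : ℝ} (hR : 0 < R)
    (hconv : ∀ x ∈ Ioo (-R) R, Summable fun n => b n * x ^ n)
    {f : ℝ → ℝ} (hf : ∀ x ∈ Ioo (-R) R, f x = ∑' n, b n * x ^ n) :
    HasFPowerSeriesOnBall f (FormalMultilinearSeries.ofScalars ℝ b) 0 (ENNReal.ofReal R) := by
  refine ⟨?_, by simpa using ENNReal.ofReal_pos.2 hR, ?_⟩
  · apply ENNReal.le_of_forall_nnreal_lt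
    intro r hr
    have hrR : (r:ℝ) < R := by
      have h := ENNReal.toReal_strict_mono (by simp) hr
      simpa [ENNReal.toReal_ofReal hR.le] using h
    set x : ℝ := ((r:ℝ) + R)/2 with hxdef
    have hx0 : (0:ℝ) ≤ (r:ℝ) := r.coe_nonneg
    have hxpos : 0 < x := by rw [hxdef]; linarith
    have hxR : x < R := by rw [hxdef]; linarith
    have hrx : (r:ℝ) ≤ x := by rw [hxdef]; linarith
    have hxI : x ∈ Ioo (-R) R := ⟨by linarith, hxR⟩
    obtain ⟨M, hM⟩ : ∃ M, ∀ n, |b n * x ^ n| ≤ M := by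
      have h0 := (hconv x hxI).tendsto_atTop_zero
      have h1 : Filter.Tendsto (fun n => |b n * x ^ n|) Filter.atTop (nhds |0|) := h0.abs
      obtain ⟨M, hM⟩ := h1.bddAbove_range
      exact ⟨M, fun n => hM (Set.mem_range_self n)⟩
    apply (FormalMultilinearSeries.ofScalars ℝ b).le_radius_of_bound M
    intro n
    rw [FormalMultilinearSeries.ofScalars_norm, Real.norm_eq_abs]
    calc |b n| * (r:ℝ) ^ n ≤ |b n| * x ^ n := by
          gcongr
      _ = |b n * x ^ n| := by
          rw [abs_mul, abs_of_nonneg (pow_nonneg hxpos.le n)]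
      _ ≤ M := hM n
  · intro y hy
    rw [mem_ball_iff_Ioo'] at hy
    have h1 := (hconv y hy).hasSum
    rw [← hf y hy] at h1
    have h3 : (fun n : ℕ => (FormalMultilinearSeries.ofScalars ℝ b n) fun _ => y)
        = fun n : ℕ => b n * y ^ n := by
      funext n
      rw [FormalMultilinearSeries.ofScalars_apply_eq, smul_eq_mul]
    rw [zero_add, h3]
    exact h1

lemma hasSum_xderiv {b : ℕ → ℝ} {R : ℝ} {f : ℝ → ℝ}
    (hball : HasFPowerSeriesOnBall f (FormalMultilinearSeries.ofScalars ℝ b) 0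
      (ENNReal.ofReal R))
    {x : ℝ} (hx : x ∈ Ioo (-R) R) :
    HasSum (fun n : ℕ => (n : ℝ) * b n * x ^ n) (x * deriv f x) := by
  have h1 := (hball.fderiv).hasSum (mem_ball_iff_Ioo'.2 hx)
  have h2 := h1.mapL (ContinuousLinearMap.apply ℝ ℝ x)
  simp only [ContinuousLinearMap.apply_apply] at h2
  have h3 : ∀ n : ℕ, (((FormalMultilinearSeries.ofScalars ℝ b).derivSeries n) (fun _ => x)) x
      = ((n:ℝ)+1) * b (n+1) * x ^ (n+1) := by
    intro n
    rw [FormalMultilinearSeries.derivSeries_apply_diag,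
      FormalMultilinearSeries.ofScalars_apply_eq]
    simp only [smul_eq_mul, nsmul_eq_mul]
    push_cast
    ring
  have h4 : fderiv ℝ f (0 + x) x = x * deriv f x := by
    rw [zero_add]
    calc fderiv ℝ f x x = fderiv ℝ f x (x • 1) := by rw [smul_eq_mul, mul_one]
      _ = x • (fderiv ℝ f x 1) := (fderiv ℝ f x).map_smul x 1
      _ = x * deriv f x := by rw [fderiv_apply_one_eq_deriv, smul_eq_mul]
  rw [h4] at h2
  have h2' : HasSum (fun n : ℕ => ((n:ℝ)+1) * b (n+1) * x ^ (n+1)) (x * deriv f x) := by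
    simpa only [h3] using h2
  have h5 : HasSum (fun n : ℕ => (n : ℝ) * b n * x ^ n)
      (x * deriv f x + ∑ i ∈ Finset.range 1, (i:ℝ) * b i * x ^ i) := by
    apply (hasSum_nat_add_iff 1).1
    have he : (fun n : ℕ => ((n+1 : ℕ):ℝ) * b (n+1) * x ^ (n+1))
        = fun n : ℕ => ((n:ℝ)+1) * b (n+1) * x ^ (n+1) := by
      funext n; push_cast; ring
    rw [he]
    exact h2'
  simpa using h5

lemma hasSum_cseries {b : ℕ → ℝ} {R s : ℝ} {f : ℝ → ℝ}
    (hball : HasFPowerSeriesOnBall f (FormalMultilinearSeries.ofScalars ℝ b) 0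
      (ENNReal.ofReal R))
    (hconv : ∀ x ∈ Ioo (-R) R, Summable fun n => b n * x ^ n)
    (hf : ∀ x ∈ Ioo (-R) R, f x = ∑' n, b n * x ^ n)
    {x : ℝ} (hx : x ∈ Ioo (-R) R) :
    HasSum (fun n : ℕ => (((n:ℝ) - s) * b n) * x ^ n) (x * deriv f x - s * f x) := by
  have h1 := hasSum_xderiv hball hx
  have h2 := (hconv x hx).hasSum.mul_left s
  rw [← hf x hx] at h2
  have h3 := h1.sub h2
  have he : (fun n : ℕ => (n : ℝ) * b n * x ^ n - s * (b n * x ^ n))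
      = fun n : ℕ => (((n:ℝ) - s) * b n) * x ^ n := by
    funext n; ring
  rw [he] at h3
  exact h3

/-- If an analytic function has vanishing iterated derivatives below `M`, it factors as
`(x - z)^M * G` with `G` analytic. -/
lemma vorder_of_iteratedDeriv {f : ℝ → ℝ} {z : ℝ} (hf : AnalyticAt ℝ f z) (M : ℕ)
    (hd : ∀ j, j < M → iteratedDeriv j f z = 0) :
    ∃ G : ℝ → ℝ, AnalyticAt ℝ G z ∧ ∀ᶠ x in nhds z, f x = (x - z) ^ M * G x := by
  obtain ⟨p, hp⟩ := hf
  by_cases hev : ∀ᶠ x in nhds z, f x = 0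
  · exact ⟨0, analyticAt_const, by filter_upwards [hev] with x hx; simp [hx]⟩
  · have hpne : p ≠ 0 := fun h => hev ((hp.locally_zero_iff).2 h)
    have hcoeff : ∀ j, j < M → p j = 0 := by
      intro j hj
      obtain ⟨r, hr⟩ := hp
      have h1 := hr.factorial_smul (1:ℝ) j
      rw [← iteratedDeriv_eq_iteratedFDeriv, hd j hj] at h1
      have h2 : (p j fun _ => (1:ℝ)) = 0 := by
        simpa [smul_eq_zero, Nat.factorial_ne_zero] using h1
      rw [← FormalMultilinearSeries.coeff_eq_zero]
      exact h2
    have hord : M ≤ p.order := by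
      by_contra h
      push_neg at h
      exact p.apply_order_ne_zero hpne (hcoeff _ h)
    have hps := hp.has_fpower_series_iterate_dslope_fslope p.order
    refine ⟨fun x => (x - z) ^ (p.order - M) * ((Function.swap dslope z)^[p.order] f x),
      ?_, ?_⟩
    · exact (((analyticAt_id).sub analyticAt_const).pow _).mul hps.analyticAt
    · filter_upwards [Filter.Eventually.of_forall hp.eq_pow_order_mul_iterate_dslope] with x hx
      rw [hx, smul_eq_mul, ← mul_assoc, ← pow_add, Nat.add_sub_cancel' hord]

/-- Transfer of vanishing order from `f` to `g x = x * f' x - s * f x`. -/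
lemma vorder_deriv_step {f g G : ℝ → ℝ} {z s : ℝ} {M : ℕ}
    (hG : AnalyticAt ℝ G z) (hfac : ∀ᶠ x in nhds z, f x = (x - z) ^ (M+1) * G x)
    (hg : ∀ᶠ x in nhds z, g x = x * deriv f x - s * f x) :
    ∃ H : ℝ → ℝ, AnalyticAt ℝ H z ∧ ∀ᶠ x in nhds z, g x = (x - z) ^ M * H x := by
  have hG' : AnalyticAt ℝ (deriv G) z := by
    have h1 : AnalyticOnNhd ℝ G {z} := by
      intro y hy
      rw [Set.mem_singleton_iff] at hy
      rw [hy]; exact hG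
    exact h1.deriv z rfl
  refine ⟨fun x => ((M:ℝ)+1) * x * G x + (x - z) * (x * deriv G x - s * G x), ?_, ?_⟩
  · exact ((analyticAt_const.mul (analyticAt_id)).mul hG).add
      (((analyticAt_id).sub analyticAt_const).mul
        (((analyticAt_id).mul hG').sub (analyticAt_const.mul hG)))
  · have hfac' : f =ᶠ[nhds z] fun x => (x - z) ^ (M+1) * G x := hfac
    have hder := hfac'.deriv
    filter_upwards [hg, hfac, hder, hG.eventually_analyticAt] with x hgx hfx hdx hGx
    have hGdiff : DifferentiableAt ℝ G x := hGx.differentiableAt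
    have hpowd : HasDerivAt (fun y : ℝ => (y - z)^(M+1)) (((M:ℝ)+1) * (x - z)^M) x := by
      have h1 := ((hasDerivAt_id x).sub_const z).fun_pow (M+1)
      simpa using h1
    have hdf : deriv f x = ((M:ℝ)+1) * (x - z)^M * G x + (x - z)^(M+1) * deriv G x := by
      rw [hdx, deriv_fun_mul hpowd.differentiableAt hGdiff, hpowd.deriv]
    rw [hgx, hdf, hfx, pow_succ]
    ring

/-- Rolle's theorem applied repeatedly along a finite set of zeros. -/
lemma rolle_chain (φ : ℝ → ℝ) : ∀ (n : ℕ) (Z : Finset ℝ) (hne : Z.Nonempty),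
    Z.card ≤ n →
    ContinuousOn φ (Icc (Z.min' hne) (Z.max' hne)) → (∀ z ∈ Z, φ z = 0) →
    ∃ W : Finset ℝ, W.card + 1 = Z.card ∧
      (∀ w ∈ W, w ∈ Ioo (Z.min' hne) (Z.max' hne) ∧ deriv φ w = 0) ∧ Disjoint W Z := by
  intro n
  induction n with
  | zero =>
    intro Z hne hcard _ _
    exact absurd hcard (by have := Finset.card_pos.2 hne; omega)
  | succ n ihn =>
    intro Z hne hcard hcont hzero
    by_cases hc1 : Z.card ≤ 1
    · have hcard1 : Z.card = 1 := le_antisymm hc1 (Finset.card_pos.2 hne)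
      refine ⟨∅, by simp [hcard1], by simp, Finset.disjoint_empty_left _⟩
    · push_neg at hc1
      have haZ : Z.min' hne ∈ Z := Z.min'_mem hne
      set a := Z.min' hne with ha
      have hZ₂ne : (Z.erase a).Nonempty := by
        rw [← Finset.card_pos, Finset.card_erase_of_mem haZ]
        omega
      set a₂ := (Z.erase a).min' hZ₂ne with ha₂
      have ha₂Z : a₂ ∈ Z := Finset.mem_of_mem_erase ((Z.erase a).min'_mem hZ₂ne)
      have haa₂ : a < a₂ := by
        have h1 : a ≤ a₂ := Z.min'_le _ ha₂Z
        have h2 : a₂ ≠ a := Finset.ne_of_mem_erase ((Z.erase a).min'_mem hZ₂ne)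
        exact h1.lt_of_ne (Ne.symm h2)
      have hmaxle : (Z.erase a).max' hZ₂ne ≤ Z.max' hne :=
        Z.le_max' _ (Finset.mem_of_mem_erase ((Z.erase a).max'_mem hZ₂ne))
      have hsubIcc : Icc ((Z.erase a).min' hZ₂ne) ((Z.erase a).max' hZ₂ne)
          ⊆ Icc (Z.min' hne) (Z.max' hne) := by
        apply Set.Icc_subset_Icc
        · exact Z.min'_le _ ha₂Z
        · exact hmaxle
      have hcard₂ : (Z.erase a).card ≤ n := by
        rw [Finset.card_erase_of_mem haZ]; omega
      obtain ⟨W₂, hW₂card, hW₂mem, hW₂disj⟩ := ihn (Z.erase a) hZ₂ne hcard₂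
        (hcont.mono hsubIcc) (fun z hz => hzero z (Finset.mem_of_mem_erase hz))
      have hIcc2 : Icc a a₂ ⊆ Icc (Z.min' hne) (Z.max' hne) :=
        Set.Icc_subset_Icc le_rfl (Z.le_max' _ ha₂Z)
      obtain ⟨w, hwmem, hwz⟩ := exists_deriv_eq_zero haa₂ (hcont.mono hIcc2)
        (by rw [hzero a haZ, hzero a₂ ha₂Z])
      have hwa₂ : w < a₂ := hwmem.2
      have hwlt : ∀ v ∈ W₂, a₂ < v := fun v hv => (hW₂mem v hv).1.1
      have hwW₂ : w ∉ W₂ := fun hw => absurd (hwlt w hw) (not_lt.2 hwa₂.le)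
      refine ⟨insert w W₂, ?_, ?_, ?_⟩
      · rw [Finset.card_insert_of_notMem hwW₂]
        rw [Finset.card_erase_of_mem haZ] at hW₂card
        omega
      · intro v hv
        rcases Finset.mem_insert.1 hv with rfl | hv₂
        · exact ⟨⟨hwmem.1, lt_of_lt_of_le hwa₂ (Z.le_max' _ ha₂Z)⟩, hwz⟩
        · obtain ⟨⟨hv1, hv2⟩, hvd⟩ := hW₂mem v hv₂
          exact ⟨⟨lt_trans haa₂ hv1, lt_of_lt_of_le hv2 hmaxle⟩, hvd⟩
      · rw [Finset.disjoint_left]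
        intro v hv hvZ
        rcases Finset.mem_insert.1 hv with rfl | hv₂
        · have hva : v ≠ a := ne_of_gt hwmem.1
          have h1 : v ∈ Z.erase a := Finset.mem_erase.2 ⟨hva, hvZ⟩
          have h2 := (Z.erase a).min'_le _ h1
          exact absurd h2 (not_le.2 hwa₂)
        · have hva : v ≠ a := ne_of_gt (lt_trans haa₂ (hwlt v hv₂))
          have hvZ₂ : v ∈ Z.erase a := Finset.mem_erase.2 ⟨hva, hvZ⟩
          exact (Finset.disjoint_left.1 hW₂disj hv₂) hvZ₂

lemma key_nochange {b : ℕ → ℝ} {R : ℝ} (hb : b ≠ 0)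
    (hconv : ∀ x ∈ Ioo (-R) R, Summable fun n => b n * x ^ n)
    {f : ℝ → ℝ} (hf : ∀ x ∈ Ioo (-R) R, f x = ∑' n, b n * x ^ n)
    {Z : Finset ℝ} (hZ : ∀ z ∈ Z, z ∈ Ioo 0 R) {m : ℝ → ℕ}
    (hm : ∀ z ∈ Z, ∃ G : ℝ → ℝ, AnalyticAt ℝ G z ∧
      ∀ᶠ x in nhds z, f x = (x - z) ^ (m z) * G x)
    (hnsc : ¬ SCaux b 1) : ∑ z ∈ Z, m z = 0 := by
  refine Finset.sum_eq_zero ?_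
  intro z hz
  by_contra hmz
  obtain ⟨G, hG, hfac⟩ := hm z hz
  have hfz : f z = 0 := by
    have h0 := hfac.self_of_nhds
    rw [h0, sub_self, zero_pow hmz, zero_mul]
  have hzI : z ∈ Ioo (-R) R := ⟨by nlinarith [(hZ z hz).1, (hZ z hz).2], (hZ z hz).2⟩
  exact tsum_ne_zero_of_no_change hb hnsc hconv (hZ z hz) (by rw [← hf z hzI]; exact hfz)

lemma descartes_key : ∀ (S : ℕ) (b : ℕ → ℝ) (R : ℝ), 0 < R → b ≠ 0 →
    (∀ x ∈ Ioo (-R) R, Summable fun n => b n * x ^ n) →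
    ∀ f : ℝ → ℝ, (∀ x ∈ Ioo (-R) R, f x = ∑' n, b n * x ^ n) →
    ∀ Z : Finset ℝ, (∀ z ∈ Z, z ∈ Ioo 0 R) →
    ∀ m : ℝ → ℕ,
      (∀ z ∈ Z, ∃ G : ℝ → ℝ, AnalyticAt ℝ G z ∧
        ∀ᶠ x in nhds z, f x = (x - z) ^ (m z) * G x) →
      ¬ SCaux b (S+1) → ∑ z ∈ Z, m z ≤ S := by
  intro S
  induction S with
  | zero =>
    intro b R hR hb hconv f hf Z hZ m hm hnsc
    exact (key_nochange hb hconv hf hZ hm hnsc).le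
  | succ S IH =>
    intro b R hR hb hconv f hf Z hZ m hm hnsc
    classical
    by_cases hN0 : ∑ z ∈ Z, m z = 0
    · omega
    by_cases h1 : SCaux b 1
    swap
    · rw [key_nochange hb hconv hf hZ hm h1]; omega
    -- there is a sign change; pick the first one
    have hex : ∃ q, ∃ p, p < q ∧ b p * b q < 0 := by
      obtain ⟨i, him, halt⟩ := h1
      refine ⟨i 1, i 0, him (by decide), ?_⟩
      simpa [Fin.castSucc_zero, Fin.succ_zero_eq_one] using halt 0
    set q := Nat.find hex with hqdef
    have hq := Nat.find_spec hex
    have hmin : ∀ n, n < q → ¬ ∃ p, p < n ∧ b p * b n < 0 := fun n hn => Nat.find_min hex hn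
    set s : ℝ := (q:ℝ) - 1/2 with hsdef
    set c : ℕ → ℝ := fun n => ((n:ℝ) - s) * b n with hcdef
    have hfns : ∀ n : ℕ, (n:ℝ) - s ≠ 0 := by
      intro n
      rcases lt_or_ge n q with h | h
      · have h2 : (n:ℝ) + 1 ≤ q := by exact_mod_cast h
        rw [hsdef]; intro h3; linarith
      · have h2 : (q:ℝ) ≤ n := by exact_mod_cast h
        rw [hsdef]; intro h3; linarith
    have hcne : c ≠ 0 := by
      obtain ⟨n0, hn0⟩ := Function.ne_iff.1 hb
      exact Function.ne_iff.2 ⟨n0, mul_ne_zero (hfns n0) hn0⟩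
    have hball := rep_ball hR hconv hf
    set g : ℝ → ℝ := fun x => x * deriv f x - s * f x with hgdef
    have hcsum : ∀ x ∈ Ioo (-R) R, HasSum (fun n => c n * x ^ n) (g x) := by
      intro x hx
      exact hasSum_cseries hball hconv hf hx
    have hgconv : ∀ x ∈ Ioo (-R) R, Summable fun n => c n * x ^ n :=
      fun x hx => (hcsum x hx).summable
    have hgf : ∀ x ∈ Ioo (-R) R, g x = ∑' n, c n * x ^ n :=
      fun x hx => ((hcsum x hx).tsum_eq).symm
    have hgball := rep_ball hR hgconv hgf
    -- the subset of zeros with positive multiplicity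
    set Z₁ := Z.filter (fun z => m z ≠ 0) with hZ₁def
    have hZ₁sub : Z₁ ⊆ Z := Finset.filter_subset _ _
    have hsum₁ : ∑ z ∈ Z₁, m z = ∑ z ∈ Z, m z := Finset.sum_filter_ne_zero Z
    have hZ₁ne : Z₁.Nonempty := by
      rw [Finset.nonempty_iff_ne_empty]
      intro h
      rw [h, Finset.sum_empty] at hsum₁
      exact hN0 hsum₁.symm
    -- the auxiliary function for Rolle
    set φ : ℝ → ℝ := fun x => x ^ (-s) * f x with hφdef
    have hanaf : ∀ x ∈ Ioo (-R) R, AnalyticAt ℝ f x :=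
      fun x hx => hball.analyticAt_of_mem (mem_ball_iff_Ioo'.2 hx)
    have hIooIoo : ∀ x ∈ Ioo (0:ℝ) R, x ∈ Ioo (-R) R :=
      fun x hx => ⟨by nlinarith [hx.1, hx.2], hx.2⟩
    have hdiff : ∀ x ∈ Ioo (0:ℝ) R, DifferentiableAt ℝ φ x := by
      intro x hx
      exact ((Real.hasDerivAt_rpow_const (p := -s) (Or.inl (ne_of_gt hx.1))).differentiableAt).mul
        ((hanaf x (hIooIoo x hx)).differentiableAt)
    have hminmax : Icc (Z₁.min' hZ₁ne) (Z₁.max' hZ₁ne) ⊆ Ioo (0:ℝ) R := by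
      intro x hx
      have h1 := hZ _ (hZ₁sub (Z₁.min'_mem hZ₁ne))
      have h2 := hZ _ (hZ₁sub (Z₁.max'_mem hZ₁ne))
      exact ⟨lt_of_lt_of_le h1.1 hx.1, lt_of_le_of_lt hx.2 h2.2⟩
    -- f vanishes at points of Z₁
    have hfZ₁ : ∀ z ∈ Z₁, f z = 0 := by
      intro z hz
      obtain ⟨G, hG, hfac⟩ := hm z (hZ₁sub hz)
      have h0 := hfac.self_of_nhds
      rw [h0, sub_self, zero_pow (Finset.mem_filter.1 hz).2, zero_mul]
    obtain ⟨W, hWcard, hWmem, hWdisj⟩ := rolle_chain φ Z₁.card Z₁ hZ₁ne le_rfl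
      (fun x hx => (hdiff x (hminmax hx)).continuousAt.continuousWithinAt)
      (fun z hz => by rw [hφdef]; simp only; rw [hfZ₁ z hz, mul_zero])
    -- g vanishes at Rolle points
    have hWIoo : ∀ w ∈ W, w ∈ Ioo (0:ℝ) R := by
      intro w hw
      have h1 := (hWmem w hw).1
      exact hminmax ⟨h1.1.le, h1.2.le⟩
    have hgW : ∀ w ∈ W, g w = 0 := by
      intro w hw
      obtain ⟨hwI, hwd⟩ := hWmem w hw
      have hwIoo : w ∈ Ioo (0:ℝ) R := hWIoo w hw
      have hw0 : (0:ℝ) < w := hwIoo.1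
      have hfd : HasDerivAt f (deriv f w) w :=
        ((hanaf w (hIooIoo w hwIoo)).differentiableAt).hasDerivAt
      have hrp : HasDerivAt (fun x : ℝ => x ^ (-s)) ((-s) * w ^ (-s - 1)) w :=
        Real.hasDerivAt_rpow_const (Or.inl hw0.ne')
      have hφd : HasDerivAt φ ((-s) * w ^ (-s-1) * f w + w ^ (-s) * deriv f w) w := hrp.mul hfd
      have hder0 : (-s) * w ^ (-s-1) * f w + w ^ (-s) * deriv f w = 0 := by
        rw [← hφd.deriv]; exact hwd
      have e1 : w ^ (-s-1) * w ^ (s+1) = 1 := by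
        rw [← Real.rpow_add hw0]
        norm_num
      have e2 : w ^ (-s) * w ^ (s+1) = w := by
        rw [← Real.rpow_add hw0]
        norm_num
      have h3 : (-s) * f w * (w ^ (-s-1) * w ^ (s+1)) + deriv f w * (w ^ (-s) * w ^ (s+1)) = 0 := by
        have h4 := congrArg (fun t : ℝ => t * w ^ (s+1)) hder0
        simp only [add_mul, zero_mul] at h4
        linear_combination h4
      rw [e1, e2] at h3
      rw [hgdef]
      simp only
      linarith
    -- apply the induction hypothesis
    set m' : ℝ → ℕ := fun x => if x ∈ W then 1 else m x - 1 with hm'def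
    have hdisj : Disjoint Z₁ W := hWdisj.symm
    set Z' := Z₁ ∪ W with hZ'def
    have hZ' : ∀ z ∈ Z', z ∈ Ioo 0 R := by
      intro z hz
      rcases Finset.mem_union.1 hz with h | h
      · exact hZ z (hZ₁sub h)
      · exact hWIoo z h
    have hgfac : ∀ z ∈ Z', ∃ H : ℝ → ℝ, AnalyticAt ℝ H z ∧
        ∀ᶠ x in nhds z, g x = (x - z) ^ (m' z) * H x := by
      intro z hz
      have hzIoo := hZ' z hz
      have hzI : z ∈ Ioo (-R) R := hIooIoo z hzIoo
      rcases Finset.mem_union.1 hz with hz₁ | hzW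
      · have hzW' : z ∉ W := Finset.disjoint_left.1 hdisj hz₁
        have hm'z : m' z = m z - 1 := by rw [hm'def]; simp only; rw [if_neg hzW']
        obtain ⟨G, hG, hfac⟩ := hm z (hZ₁sub hz₁)
        have hmz1 : 1 ≤ m z := Nat.one_le_iff_ne_zero.2 (Finset.mem_filter.1 hz₁).2
        have hMeq : m z = (m z - 1) + 1 := (Nat.sub_add_cancel hmz1).symm
        rw [hMeq] at hfac
        obtain ⟨H, hH, hHfac⟩ := vorder_deriv_step hG hfac
          (Filter.Eventually.of_forall (fun x => rfl))
        refine ⟨H, hH, ?_⟩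
        rw [hm'z]
        exact hHfac
      · have hm'z : m' z = 1 := by rw [hm'def]; simp only; rw [if_pos hzW]
        have hga : AnalyticAt ℝ g z := hgball.analyticAt_of_mem (mem_ball_iff_Ioo'.2 hzI)
        have h2 := vorder_of_iteratedDeriv hga 1 (fun j hj => by
          have hj0 : j = 0 := Nat.lt_one_iff.1 hj
          rw [hj0, iteratedDeriv_zero]
          exact hgW z hzW)
        rw [hm'z]
        exact h2
    have hnscc : ¬ SCaux c (S+1) := by
      intro hscc
      exact hnsc (sc_step (fun n => rfl) hq hmin S hscc)
    have hIH := IH c R hR hcne hgconv g hgf Z' hZ' m' hgfac hnscc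
    -- counting
    rw [hZ'def, Finset.sum_union hdisj] at hIH
    have e1 : ∑ z ∈ Z₁, m' z + Z₁.card = ∑ z ∈ Z₁, m z := by
      rw [Finset.card_eq_sum_ones, ← Finset.sum_add_distrib]
      apply Finset.sum_congr rfl
      intro z hz
      have hzW : z ∉ W := Finset.disjoint_left.1 hdisj hz
      have hmz : m z ≠ 0 := (Finset.mem_filter.1 hz).2
      rw [hm'def]
      simp only
      rw [if_neg hzW]
      omega
    have e2 : ∑ w ∈ W, m' w = W.card := by
      rw [Finset.card_eq_sum_ones]
      apply Finset.sum_congr rfl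
      intro w hw
      rw [hm'def]
      simp only
      rw [if_pos hw]
    rw [e2] at hIH
    omega

theorem stmt_9 (b : ℕ → ℝ) (R : ℝ) (hR : 0 < R) (hb : b ≠ 0)
    (hconv : ∀ x ∈ Set.Ioo (-R) R, Summable fun n => b n * x ^ n)
    (f : ℝ → ℝ) (hf : ∀ x ∈ Set.Ioo (-R) R, f x = ∑' n, b n * x ^ n)
    (Z : Finset ℝ) (hZ : ∀ z ∈ Z, z ∈ Set.Ioo 0 R)
    (m : ℝ → ℕ) (hm : ∀ z ∈ Z, ∀ j < m z, iteratedDeriv j f z = 0) :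
    ((∑ z ∈ Z, m z : ℕ) : ℕ∞) ≤ signChanges b := by
  classical
  by_cases hSC : SCaux b (∑ z ∈ Z, m z)
  · unfold signChanges
    exact le_iSup₂ (f := fun (k : ℕ) (_ : k ∈ {k : ℕ | SCaux b k}) => (k : ℕ∞))
      (∑ z ∈ Z, m z) hSC
  · rcases Nat.eq_zero_or_pos (∑ z ∈ Z, m z) with h0 | hpos
    · rw [h0]; exact zero_le
    · have h1 : ¬ SCaux b ((∑ z ∈ Z, m z - 1) + 1) := by
        rwa [Nat.sub_add_cancel hpos]
      have hball := rep_ball hR hconv hf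
      have hm' : ∀ z ∈ Z, ∃ G : ℝ → ℝ, AnalyticAt ℝ G z ∧
          ∀ᶠ x in nhds z, f x = (x - z) ^ (m z) * G x := by
        intro z hz
        have hzI : z ∈ Ioo (-R) R := ⟨by nlinarith [(hZ z hz).1, (hZ z hz).2], (hZ z hz).2⟩
        exact vorder_of_iteratedDeriv (hball.analyticAt_of_mem (mem_ball_iff_Ioo'.2 hzI))
          (m z) (fun j hj => hm z hz j hj)
      have h2 := descartes_key (∑ z ∈ Z, m z - 1) b R hR hb hconv f hf Z hZ m hm' h1
      exact absurd h2 (by omega)
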